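/- Let ρ be a density operator and Λ a measurement operator with 0 ≤ Λ ≤ I on a finite-dimensional Hilbert space. If Tr{Λρ} ≥ 1 − ε for some ε ∈ [0,1], then ‖ρ − √Λ ρ √Λ‖₁ ≤ 2√ε, where ‖·‖₁ denotes the trace norm. -/

import Mathlib

open Matrix BigOperators Kronecker
open scoped Classical ComplexOrder

variable {d : Type*} [Fintype d] [DecidableEq d]

/-- The positive semidefinite square root of a positive semidefinite matrix
(the definition `Matrix.PosSemidef.sqrt` of Mathlib, December 2024, since removed). -/
noncomputable def Matrix.PosSemidef.sqrt {𝕜 : Type*} [RCLike 𝕜] {n : Type*} [Fintype n]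
    [DecidableEq n] {A : Matrix n n 𝕜} (hA : A.PosSemidef) : Matrix n n 𝕜 :=
  hA.1.eigenvectorUnitary.1 * diagonal ((↑) ∘ (√·) ∘ hA.1.eigenvalues) *
  (star hA.1.eigenvectorUnitary : Matrix n n 𝕜)

/-- Trace norm of a matrix. -/
noncomputable def traceNorm (A : Matrix d d ℂ) : ℝ :=
  ((Matrix.posSemidef_conjTranspose_mul_self A).sqrt.trace).re

/-- Spectral functional calculus for a Hermitian matrix. -/
noncomputable def specFun {A : Matrix d d ℂ} (hA : A.IsHermitian) (f : ℝ → ℝ) :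
    Matrix d d ℂ :=
  (hA.eigenvectorUnitary : Matrix d d ℂ) *
    Matrix.diagonal (fun i => (f (hA.eigenvalues i) : ℂ)) *
    star (hA.eigenvectorUnitary : Matrix d d ℂ)

/-- Matrix power via functional calculus, with the convention `0 ^ s = 0` on kernels.
For `s = -1/2` this gives the square root of the Moore–Penrose inverse. -/
noncomputable def mpow (A : Matrix d d ℂ) (s : ℝ) : Matrix d d ℂ :=
  if hA : A.PosSemidef then
    specFun hA.1 (fun t => if t = 0 then 0 else t ^ s)
  else 0

/-- Base-2 matrix logarithm via functional calculus, `log 0 := 0` on kernels. -/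
noncomputable def mlog (A : Matrix d d ℂ) : Matrix d d ℂ :=
  if hA : A.PosSemidef then
    specFun hA.1 (fun t => if t = 0 then 0 else Real.logb 2 t)
  else 0

/-- Positive spectral projection `{X ≥ 0}` of a Hermitian matrix. -/
noncomputable def posProj {A : Matrix d d ℂ} (hA : A.IsHermitian) : Matrix d d ℂ :=
  specFun hA (fun t => if 0 ≤ t then 1 else 0)

/-- A density operator: positive semi-definite with unit trace. -/
def IsDensity (ρ : Matrix d d ℂ) : Prop := ρ.PosSemidef ∧ ρ.trace = 1

/-- A measurement operator: `0 ≤ Λ ≤ I`. -/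
def IsMeasOp (Λ : Matrix d d ℂ) : Prop := Λ.PosSemidef ∧ (1 - Λ).PosSemidef

/-- `n`-fold tensor power of a matrix. -/
def tpow (ρ : Matrix d d ℂ) (n : ℕ) : Matrix (Fin n → d) (Fin n → d) ℂ :=
  Matrix.of fun x y => ∏ i, ρ (x i) (y i)

/-- Partial trace over the right (second) tensor factor. -/
noncomputable def ptraceR {a b : Type*} [Fintype a] [Fintype b]
    (ρ : Matrix (a × b) (a × b) ℂ) : Matrix a a ℂ :=
  Matrix.of fun i j => ∑ k, ρ (i, k) (j, k)

/-- Partial trace over the left (first) tensor factor. -/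
noncomputable def ptraceL {a b : Type*} [Fintype a] [Fintype b]
    (ρ : Matrix (a × b) (a × b) ℂ) : Matrix b b ℂ :=
  Matrix.of fun i j => ∑ k, ρ (k, i) (k, j)

/-- Quantum relative entropy (base 2), via the `mlog` convention. -/
noncomputable def qRelEnt (ρ σ : Matrix d d ℂ) : ℝ :=
  ((ρ * (mlog ρ - mlog σ)).trace).re

/-- ε-hypothesis testing relative entropy. -/
noncomputable def DH (ε : ℝ) (ρ σ : Matrix d d ℂ) : ℝ :=
  -Real.logb 2 (sInf {x : ℝ | ∃ Λ : Matrix d d ℂ,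
    IsMeasOp Λ ∧ 1 - ε ≤ ((Λ * ρ).trace).re ∧ x = ((Λ * σ).trace).re})

/-- Petz–Rényi relative entropy of order α. -/
noncomputable def DAlpha (α : ℝ) (ρ σ : Matrix d d ℂ) : ℝ :=
  (1 / (α - 1)) * Real.logb 2 (((mpow ρ α * mpow σ (1 - α)).trace).re)

/-- Shannon entropy (bits) of a probability vector. -/
noncomputable def shannon (p : d → ℝ) : ℝ := -∑ x, p x * Real.logb 2 (p x)

/-- von Neumann entropy (bits). -/
noncomputable def vnEntropy (A : Matrix d d ℂ) : ℝ :=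
  if hA : A.IsHermitian then -∑ i, hA.eigenvalues i * Real.logb 2 (hA.eigenvalues i) else 0

/-- Collision (order-2) conditional entropy `H₂(C|S)` of a bipartite state on `s ⊗ c`. -/
noncomputable def H2cond {s c : Type*} [Fintype s] [Fintype c] [DecidableEq s] [DecidableEq c]
    (ω : Matrix (s × c) (s × c) ℂ) : ℝ :=
  -Real.logb 2 ((ω * (mpow (ptraceR ω) (-(1/2)) ⊗ₖ (1 : Matrix c c ℂ)) *
      ω * (mpow (ptraceR ω) (-(1/2)) ⊗ₖ (1 : Matrix c c ℂ))).trace).re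


section GentleHelpers

namespace GentleAux

variable {d : Type*} [Fintype d] [DecidableEq d]

section spec
variable {A : Matrix d d ℂ} (hA : A.IsHermitian)

lemma specFun_mul (f g : ℝ → ℝ) :
    specFun hA f * specFun hA g = specFun hA (fun t => f t * g t) := by
  unfold specFun
  have hu : (star (hA.eigenvectorUnitary : Matrix d d ℂ)) *
      (hA.eigenvectorUnitary : Matrix d d ℂ) = 1 :=
    Matrix.UnitaryGroup.star_mul_self _
  have key : ∀ X : Matrix d d ℂ, (star (hA.eigenvectorUnitary : Matrix d d ℂ)) *
      ((hA.eigenvectorUnitary : Matrix d d ℂ) * X) = X := fun X => by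
    rw [← mul_assoc, hu, one_mul]
  simp only [mul_assoc]
  rw [key, ← mul_assoc (Matrix.diagonal _) (Matrix.diagonal _), Matrix.diagonal_mul_diagonal]
  congr 2
  ext i
  push_cast
  rfl

lemma specFun_one : specFun hA (fun _ => 1) = 1 := by
  unfold specFun
  have : (Matrix.diagonal (fun _ : d => ((1:ℝ) : ℂ))) = 1 := by simp
  rw [this, mul_one]
  exact Matrix.mem_unitaryGroup_iff.mp hA.eigenvectorUnitary.2

lemma specFun_sub (f g : ℝ → ℝ) :
    specFun hA f - specFun hA g = specFun hA (fun t => f t - g t) := by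
  unfold specFun
  rw [← Matrix.sub_mul, ← Matrix.mul_sub, Matrix.diagonal_sub]
  congr 2
  ext i
  push_cast
  rfl

lemma specFun_id : specFun hA (fun t => t) = A := by
  conv_rhs => rw [hA.spectral_theorem]
  rfl

lemma specFun_isHermitian (f : ℝ → ℝ) : (specFun hA f).IsHermitian := by
  show _ = _
  unfold specFun
  rw [Matrix.star_eq_conjTranspose, Matrix.conjTranspose_mul, Matrix.conjTranspose_mul,
    Matrix.conjTranspose_conjTranspose, Matrix.diagonal_conjTranspose]
  have : (star fun i => (f (hA.eigenvalues i) : ℂ)) = fun i => (f (hA.eigenvalues i) : ℂ) := by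
    funext i
    simp [Complex.conj_ofReal]
  rw [this, mul_assoc]

lemma specFun_posSemidef (f : ℝ → ℝ) (hf : ∀ i, 0 ≤ f (hA.eigenvalues i)) :
    (specFun hA f).PosSemidef := by
  unfold specFun
  rw [Matrix.star_eq_conjTranspose]
  refine (Matrix.posSemidef_diagonal_iff.mpr fun i => ?_).mul_mul_conjTranspose_same _
  rw [Complex.zero_le_real]
  exact hf i

end spec

lemma trace_re_nonneg {A : Matrix d d ℂ} (h : A.PosSemidef) : 0 ≤ A.trace.re := by
  rw [Matrix.trace, Complex.re_sum]
  refine Finset.sum_nonneg fun i _ => ?_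
  have := h.dotProduct_mulVec_nonneg (Pi.single i 1)
  simp only [Matrix.mulVec_single, mul_one] at this
  have h2 : star (Pi.single i 1 : d → ℂ) ⬝ᵥ (MulOpposite.op (1 : ℂ) • A.col i) = A i i := by
    simp [dotProduct, Pi.single_apply]
  rw [h2] at this
  exact (Complex.le_def.mp this).1

lemma trace_mul_re_nonneg {A B : Matrix d d ℂ} (hA : A.PosSemidef) (hB : B.PosSemidef) :
    0 ≤ ((A * B).trace).re := by
  obtain ⟨C, rfl⟩ : ∃ C : Matrix d d ℂ, A = Cᴴ * C := by
    open scoped MatrixOrder in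
    exact ⟨CFC.sqrt A, by
      rw [(CFC.sqrt_nonneg A).posSemidef.1.eq, CFC.sqrt_mul_sqrt_self A hA.nonneg]⟩
  rw [(Matrix.trace_mul_cycle C B Cᴴ).symm]
  exact trace_re_nonneg (hB.mul_mul_conjTranspose_same C)

omit [DecidableEq d] in
lemma trace_conjTranspose_mul_apply (A B : Matrix d d ℂ) :
    ((Aᴴ * B).trace) = ∑ j, ∑ i, (starRingEnd ℂ) (A i j) * B i j := by
  simp [Matrix.trace, Matrix.mul_apply, Matrix.diag, Matrix.conjTranspose_apply]

omit [DecidableEq d] in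
lemma trace_self_re (A : Matrix d d ℂ) :
    ((Aᴴ * A).trace).re = ∑ p : d × d, ‖A p.2 p.1‖ ^ 2 := by
  rw [trace_conjTranspose_mul_apply, Complex.re_sum, Fintype.sum_prod_type]
  congr 1; funext j
  rw [Complex.re_sum]
  congr 1; funext i
  rw [mul_comm, Complex.mul_conj, Complex.sq_norm, Complex.ofReal_re]

omit [DecidableEq d] in
lemma trace_cs (A B : Matrix d d ℂ) :
    ((Aᴴ * B).trace).re ≤ Real.sqrt ((Aᴴ * A).trace).re * Real.sqrt ((Bᴴ * B).trace).re := by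
  rw [trace_self_re A, trace_self_re B]
  set f : d × d → ℝ := fun p => ‖A p.2 p.1‖
  set g : d × d → ℝ := fun p => ‖B p.2 p.1‖
  have h1 : ((Aᴴ * B).trace).re ≤ ∑ p : d × d, f p * g p := by
    rw [trace_conjTranspose_mul_apply, Complex.re_sum, Fintype.sum_prod_type]
    refine Finset.sum_le_sum fun j _ => ?_
    rw [Complex.re_sum]
    refine Finset.sum_le_sum fun i _ => ?_
    calc ((starRingEnd ℂ) (A i j) * B i j).re ≤ ‖(starRingEnd ℂ) (A i j) * B i j‖ :=
          Complex.re_le_norm _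
      _ = f (j, i) * g (j, i) := by simp [f, g, _root_.map_mul]
  refine h1.trans ?_
  have h2 : (∑ p : d × d, f p * g p) ^ 2 ≤ (∑ p : d × d, f p ^ 2) * ∑ p : d × d, g p ^ 2 :=
    Finset.sum_mul_sq_le_sq_mul_sq _ _ _
  have h3 : 0 ≤ ∑ p : d × d, f p * g p :=
    Finset.sum_nonneg fun p _ => mul_nonneg (norm_nonneg _) (norm_nonneg _)
  calc ∑ p : d × d, f p * g p = Real.sqrt ((∑ p : d × d, f p * g p) ^ 2) := by
        rw [Real.sqrt_sq h3]
    _ ≤ Real.sqrt ((∑ p : d × d, f p ^ 2) * ∑ p : d × d, g p ^ 2) := Real.sqrt_le_sqrt h2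
    _ = _ := Real.sqrt_mul (Finset.sum_nonneg fun p _ => sq_nonneg _) _

lemma eigenvalues_le_one {Λ : Matrix d d ℂ} (hΛ : Λ.PosSemidef) (hΛI : (1 - Λ).PosSemidef)
    (i : d) : hΛ.1.eigenvalues i ≤ 1 := by
  have hv := hΛI.re_dotProduct_nonneg ⇑(hΛ.1.eigenvectorBasis i)
  set v := hΛ.1.eigenvectorBasis i with hvdef
  have hvv : star ⇑v ⬝ᵥ ⇑v = 1 := by
    have h1 : (inner ℂ v v : ℂ) = 1 := by
      have := hΛ.1.eigenvectorBasis.orthonormal.1 i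
      rw [@inner_self_eq_norm_sq_to_K ℂ, this]
      norm_num
    rw [← h1, EuclideanSpace.inner_eq_star_dotProduct, dotProduct_comm]
  have hmul : (1 - Λ) *ᵥ ⇑v = ⇑v - hΛ.1.eigenvalues i • ⇑v := by
    rw [Matrix.sub_mulVec, Matrix.one_mulVec, hΛ.1.mulVec_eigenvectorBasis]
  rw [hmul, dotProduct_sub, hvv] at hv
  have hsm : star ⇑v ⬝ᵥ (hΛ.1.eigenvalues i • ⇑v) = (hΛ.1.eigenvalues i : ℂ) := by
    rw [dotProduct_smul, RCLike.real_smul_eq_coe_smul (K := ℂ), smul_eq_mul, hvv, mul_one]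
    norm_cast
  rw [hsm] at hv
  have : RCLike.re ((1 : ℂ) - (hΛ.1.eigenvalues i : ℂ)) = 1 - hΛ.1.eigenvalues i := by simp
  rw [this] at hv
  linarith

end GentleAux

end GentleHelpers

section SqrtHelpers

open scoped MatrixOrder

namespace Matrix.PosSemidef

variable {d : Type*} [Fintype d] [DecidableEq d]

lemma posSemidef_sqrt {A : Matrix d d ℂ} (hA : A.PosSemidef) : hA.sqrt.PosSemidef :=
  GentleAux.specFun_posSemidef hA.1 Real.sqrt (fun _ => Real.sqrt_nonneg _)

lemma sqrt_mul_self {A : Matrix d d ℂ} (hA : A.PosSemidef) : hA.sqrt * hA.sqrt = A := by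
  have h1 : hA.sqrt = specFun hA.1 Real.sqrt := rfl
  rw [h1, GentleAux.specFun_mul]
  conv_rhs => rw [← GentleAux.specFun_id hA.1]
  unfold specFun
  congr 3
  funext i
  exact congrArg _ (Real.mul_self_sqrt (hA.eigenvalues_nonneg i))

lemma eq_sqrt_of_sq_eq {A : Matrix d d ℂ} (hA : A.PosSemidef) (B : Matrix d d ℂ)
    {hB : B.PosSemidef} (hAB : A ^ 2 = B) : A = hB.sqrt := by
  have e : hB.sqrt = CFC.sqrt B := by
    rw [CFC.sqrt_eq_real_sqrt B hB.nonneg, cfcₙ_eq_cfc (f := Real.sqrt) (a := B), hB.1.cfc_eq, Matrix.IsHermitian.cfc,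
      Unitary.conjStarAlgAut_apply]
    rfl
  rw [e, eq_comm]
  exact CFC.sqrt_unique (by rw [← hAB, sq]) hA.nonneg

end Matrix.PosSemidef

end SqrtHelpers

/-- **Gentle operator lemma.** If a measurement operator `Λ` detects the density operator `ρ`
with probability at least `1 - ε`, then `‖ρ - √Λ ρ √Λ‖₁ ≤ 2√ε`. -/
theorem gentle_operator (ρ Λ : Matrix d d ℂ) (hρ : IsDensity ρ)
    (hΛ : Λ.PosSemidef) (hΛI : (1 - Λ).PosSemidef)
    (ε : ℝ) (hε : ε ∈ Set.Icc (0 : ℝ) 1)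
    (h : 1 - ε ≤ ((Λ * ρ).trace).re) :
    traceNorm (ρ - hΛ.sqrt * ρ * hΛ.sqrt) ≤ 2 * Real.sqrt ε := by
  classical
  open GentleAux in
  obtain ⟨hε0, hε1⟩ := hε
  set S := hΛ.sqrt with hSdef
  have hS : S.PosSemidef := hΛ.posSemidef_sqrt
  have hSH : Sᴴ = S := hS.1
  have hSS : S * S = Λ := hΛ.sqrt_mul_self
  have hSspec : S = specFun hΛ.1 Real.sqrt := rfl
  set R := hρ.1.sqrt with hRdef
  have hR : R.PosSemidef := hρ.1.posSemidef_sqrt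
  have hRH : Rᴴ = R := hR.1
  have hRR : R * R = ρ := hρ.1.sqrt_mul_self
  clear_value S R
  clear hSdef hRdef
  set X := ρ - S * ρ * S with hXdef
  have hSρS : (S * ρ * S).PosSemidef := by
    have := hρ.1.mul_mul_conjTranspose_same S
    rwa [hSH] at this
  have hXH : X.IsHermitian := hρ.1.1.sub hSρS.1
  clear_value X
  have h1SH : (1 - S)ᴴ = 1 - S := (Matrix.isHermitian_one.sub hS.1)
  -- the "sign" operator
  set sgn : ℝ → ℝ := fun t => if 0 ≤ t then 1 else -1 with hsgn
  set C := specFun hXH sgn with hCdef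
  have hCH : Cᴴ = C := specFun_isHermitian hXH sgn
  have hC2 : C * C = 1 := by
    rw [hCdef, specFun_mul]
    have h : (fun t => sgn t * sgn t) = fun _ : ℝ => 1 := by
      funext t; by_cases h : 0 ≤ t <;> simp [hsgn, h]
    rw [h, specFun_one]
  have hCX : C * X = (Matrix.posSemidef_conjTranspose_mul_self X).sqrt := by
    have hM : C * X = specFun hXH (fun t => |t|) := by
      have e0 : C * X = C * specFun hXH (fun t => t) :=
        congrArg (fun M => C * M) (specFun_id hXH).symm
      have hfun : (fun t : ℝ => sgn t * t) = fun t : ℝ => |t| := by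
        funext u
        by_cases hu : 0 ≤ u
        · simp [hsgn, hu, abs_of_nonneg hu]
        · simp [hsgn, hu, abs_of_neg (lt_of_not_ge hu)]
      rw [e0, hCdef, specFun_mul, hfun]
    rw [hM]
    refine Matrix.PosSemidef.eq_sqrt_of_sq_eq ?_ _ ?_
    · exact specFun_posSemidef hXH _ (fun i => abs_nonneg _)
    · rw [pow_two, specFun_mul]
      have h : (fun t => |t| * |t|) = fun t : ℝ => t * t := by
        funext t; exact abs_mul_abs_self t
      rw [h, show Xᴴ = X from hXH]
      have h2 := specFun_mul hXH (fun t : ℝ => t) (fun t : ℝ => t)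
      rw [specFun_id] at h2
      exact h2.symm
  clear_value C
  -- key trace quantities
  set T := (1 - S) * (1 - S) with hTdef
  have hρ1 : ρ.trace.re = 1 := by rw [hρ.2]; norm_num
  -- spectral representation facts for Λ
  have h1S : (1 : Matrix d d ℂ) - S = specFun hΛ.1 (fun t => 1 - Real.sqrt t) := by
    have h0 := specFun_sub hΛ.1 (fun _ => 1) Real.sqrt
    rw [specFun_one, ← hSspec] at h0
    exact h0
  have hTspec : T = specFun hΛ.1 (fun t => (1 - Real.sqrt t) * (1 - Real.sqrt t)) := by
    rw [hTdef, h1S, specFun_mul]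
  have h1Λ : (1 : Matrix d d ℂ) - Λ = specFun hΛ.1 (fun t => 1 - t) := by
    have h0 := specFun_sub hΛ.1 (fun _ => 1) (fun t => t)
    rw [specFun_one, specFun_id] at h0
    exact h0
  have hdiffPSD : ((1 : Matrix d d ℂ) - Λ - T).PosSemidef := by
    rw [h1Λ, hTspec, specFun_sub]
    refine specFun_posSemidef hΛ.1 _ (fun i => ?_)
    have h0 := hΛ.eigenvalues_nonneg i
    have h1 := eigenvalues_le_one hΛ hΛI i
    have hs := Real.sq_sqrt h0
    have hsn := Real.sqrt_nonneg (hΛ.1.eigenvalues i)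
    have hs1 : Real.sqrt (hΛ.1.eigenvalues i) ≤ 1 := by nlinarith
    nlinarith [mul_nonneg hsn (sub_nonneg.mpr hs1)]
  clear_value T
  -- bounds on the two scalar quantities
  have hΛρ : ((ρ * Λ).trace).re = ((Λ * ρ).trace).re := by rw [Matrix.trace_mul_comm]
  have hρ1Λ : ((ρ * ((1 : Matrix d d ℂ) - Λ)).trace).re = 1 - ((ρ * Λ).trace).re := by
    rw [Matrix.mul_sub, mul_one, Matrix.trace_sub, Complex.sub_re, hρ1]
  have hEε : ((ρ * T).trace).re ≤ ε := by
    have h5 : 0 ≤ ((ρ * ((1 : Matrix d d ℂ) - Λ - T)).trace).re :=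
      trace_mul_re_nonneg hρ.1 hdiffPSD
    have hsplit : ρ * ((1 : Matrix d d ℂ) - Λ - T) = ρ * (1 - Λ) - ρ * T := by
      noncomm_ring
    rw [hsplit, Matrix.trace_sub, Complex.sub_re, hρ1Λ] at h5
    have h7 := h
    rw [← hΛρ] at h7
    linarith
  have hΛ1 : ((ρ * Λ).trace).re ≤ 1 := by
    have h6 : 0 ≤ ((ρ * ((1 : Matrix d d ℂ) - Λ)).trace).re :=
      trace_mul_re_nonneg hρ.1 hΛI
    rw [hρ1Λ] at h6
    linarith
  -- trace identities for the Cauchy-Schwarz terms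
  have ht1A : (((R * (1 - S) * C)ᴴ * (R * (1 - S) * C)).trace).re = ((ρ * T).trace).re := by
    have e : (R * (1 - S) * C)ᴴ * (R * (1 - S) * C) =
        C * ((1 - S) * (R * R) * (1 - S) * C) := by
      rw [Matrix.conjTranspose_mul, Matrix.conjTranspose_mul, hCH, h1SH, hRH]
      noncomm_ring
    rw [e, Matrix.trace_mul_comm]
    have e2 : (1 - S) * (R * R) * (1 - S) * C * C = (1 - S) * ((R * R) * ((1 - S) * (C * C))) := by
      noncomm_ring
    rw [e2, hC2, mul_one, Matrix.trace_mul_comm]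
    have e3 : R * R * ((1 - S) * (1 - S)) = ρ * T := by rw [hTdef, ← hRR]
    rw [← e3, mul_assoc (R * R)]
  have ht2A : (((R * S * C)ᴴ * (R * S * C)).trace).re = ((ρ * Λ).trace).re := by
    have e : (R * S * C)ᴴ * (R * S * C) = C * (S * (R * R) * S * C) := by
      rw [Matrix.conjTranspose_mul, Matrix.conjTranspose_mul, hCH, hSH, hRH]
      noncomm_ring
    rw [e, Matrix.trace_mul_comm]
    have e2 : S * (R * R) * S * C * C = S * ((R * R) * (S * (C * C))) := by noncomm_ring
    rw [e2, hC2, mul_one, Matrix.trace_mul_comm]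
    have e3 : R * R * (S * S) = ρ * Λ := by rw [← hRR, ← hSS]
    rw [← e3, mul_assoc (R * R)]
  have ht2B : (((R * (1 - S))ᴴ * (R * (1 - S))).trace).re = ((ρ * T).trace).re := by
    have e : (R * (1 - S))ᴴ * (R * (1 - S)) = (1 - S) * ((R * R) * (1 - S)) := by
      rw [Matrix.conjTranspose_mul, h1SH, hRH]
      noncomm_ring
    rw [e, Matrix.trace_mul_comm]
    have e3 : R * R * (1 - S) * (1 - S) = ρ * T := by
      rw [hTdef, ← hRR, mul_assoc (R * R)]
    rw [← e3]
  have htB1 : ((Rᴴ * R).trace).re = 1 := by rw [hRH, hRR, hρ1]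
  -- the two Cauchy-Schwarz estimates
  have hT1 : C * ((1 - S) * ρ) = (R * (1 - S) * C)ᴴ * R := by
    rw [Matrix.conjTranspose_mul, Matrix.conjTranspose_mul, hCH, h1SH, hRH, ← hRR]
    noncomm_ring
  have hT2 : C * (S * ρ * (1 - S)) = (R * S * C)ᴴ * (R * (1 - S)) := by
    rw [Matrix.conjTranspose_mul, Matrix.conjTranspose_mul, hCH, hSH, hRH, ← hRR]
    noncomm_ring
  have term1 : ((C * ((1 - S) * ρ)).trace).re ≤ Real.sqrt ε := by
    rw [hT1]
    refine (trace_cs _ _).trans ?_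
    rw [ht1A, htB1, Real.sqrt_one, mul_one]
    exact Real.sqrt_le_sqrt hEε
  have term2 : ((C * (S * ρ * (1 - S))).trace).re ≤ Real.sqrt ε := by
    rw [hT2]
    refine (trace_cs _ _).trans ?_
    rw [ht2A, ht2B]
    calc Real.sqrt ((ρ * Λ).trace).re * Real.sqrt ((ρ * T).trace).re
        ≤ 1 * Real.sqrt ε :=
          mul_le_mul (Real.sqrt_le_one.mpr hΛ1) (Real.sqrt_le_sqrt hEε)
            (Real.sqrt_nonneg _) zero_le_one
      _ = Real.sqrt ε := one_mul _
  -- put everything together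
  have hXsplit : C * X = C * ((1 - S) * ρ) + C * (S * ρ * (1 - S)) := by
    rw [← Matrix.mul_add]
    congr 1
    rw [hXdef]
    noncomm_ring
  have key : traceNorm X = ((C * X).trace).re := by
    rw [traceNorm, hCX]
  calc traceNorm X = ((C * X).trace).re := key
    _ = ((C * ((1 - S) * ρ)).trace).re + ((C * (S * ρ * (1 - S))).trace).re := by
        rw [hXsplit, Matrix.trace_add, Complex.add_re]
    _ ≤ Real.sqrt ε + Real.sqrt ε := add_le_add term1 term2
    _ = 2 * Real.sqrt ε := by ring
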